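/- On a complete separable metric space Ω, the Prokhorov metric d_P and the Wasserstein metric d_W satisfy d_P(μ,ν)² ≤ d_W(μ,ν) ≤ (diam(Ω)+1)·d_P(μ,ν), where diam(Ω) = sup{d(x,y) : x,y ∈ Ω} is assumed finite. -/

import Mathlib

open Finset

lemma exists_nat_flow {n : ℕ} (R : Fin n → Fin n → Prop) [DecidableRel R]
    (α β : Fin n → ℕ) (K : ℕ)
    (hcond : ∀ S : Finset (Fin n),
      ∑ i ∈ S, α i ≤ ∑ j ∈ S.biUnion (fun i => univ.filter (R i)), β j + K) :
    ∃ (m : Fin n → Fin n → ℕ) (d : Fin n → ℕ),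
      (∀ i j, ¬ R i j → m i j = 0) ∧
      (∀ i, (∑ j, m i j) + d i = α i) ∧
      (∀ j, (∑ i, m i j) ≤ β j) ∧
      ((∑ i, d i) ≤ K) := by
  classical
  set col : Fin n → Finset ((Fin n × ℕ) ⊕ ℕ) :=
    fun j => (range (β j)).image (fun l => Sum.inl (j, l)) with hcol
  set dum : Finset ((Fin n × ℕ) ⊕ ℕ) := (range K).image Sum.inr with hdum
  set T : Fin n → Finset ((Fin n × ℕ) ⊕ ℕ) :=
    fun i => ((univ.filter (R i)).biUnion col) ∪ dum with hT
  have hcolcard : ∀ j, (col j).card = β j := by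
    intro j
    rw [hcol, card_image_of_injective _
      (fun a b h => by simp only [Sum.inl.injEq, Prod.mk.injEq] at h; exact h.2), card_range]
  have hdumcard : dum.card = K := by
    rw [hdum, card_image_of_injective _ Sum.inr_injective, card_range]
  have hmemT : ∀ i (a : (Fin n × ℕ) ⊕ ℕ), a ∈ T i ↔
      (∃ j, R i j ∧ ∃ l < β j, a = Sum.inl (j, l)) ∨ (∃ l < K, a = Sum.inr l) := by
    intro i a
    simp only [hT, mem_union, mem_biUnion, mem_filter, mem_univ, true_and, hcol, hdum,
      mem_image, mem_range]
    constructor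
    · rintro (⟨j, hR, l, hl, rfl⟩ | ⟨l, hl, rfl⟩)
      · exact Or.inl ⟨j, hR, l, hl, rfl⟩
      · exact Or.inr ⟨l, hl, rfl⟩
    · rintro (⟨j, hR, l, hl, rfl⟩ | ⟨l, hl, rfl⟩)
      · exact Or.inl ⟨j, hR, l, hl, rfl⟩
      · exact Or.inr ⟨l, hl, rfl⟩
  -- Hall's condition
  have hall : ∀ s : Finset (Σ i : Fin n, Fin (α i)),
      s.card ≤ (s.biUnion (fun x => T x.1)).card := by
    intro s
    set S := s.image Sigma.fst with hS
    have h1 : s.card ≤ ∑ i ∈ S, α i := by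
      have hsub : s ⊆ S.sigma (fun i => (univ : Finset (Fin (α i)))) := by
        intro x hx
        rw [mem_sigma]
        exact ⟨mem_image_of_mem _ hx, mem_univ _⟩
      calc s.card ≤ (S.sigma (fun i => (univ : Finset (Fin (α i))))).card := card_le_card hsub
        _ = ∑ i ∈ S, α i := by rw [card_sigma]; simp
    rcases s.eq_empty_or_nonempty with rfl | hsne
    · simp
    have hSne : S.Nonempty := hsne.image _
    have h2 : s.biUnion (fun x => T x.1) = S.biUnion T := by
      ext a
      simp only [mem_biUnion, hS, mem_image]
      constructor
      · rintro ⟨x, hx, hax⟩; exact ⟨x.1, ⟨x, hx, rfl⟩, hax⟩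
      · rintro ⟨i, ⟨x, hx, rfl⟩, hax⟩; exact ⟨x, hx, hax⟩
    set J := S.biUnion (fun i => univ.filter (R i)) with hJ
    have h3 : S.biUnion T = (J.biUnion col) ∪ dum := by
      ext a
      simp only [mem_biUnion, hT, mem_union, hJ, mem_filter, mem_univ, true_and]
      constructor
      · rintro ⟨i, hi, h | h⟩
        · rcases h with ⟨j, hj, haj⟩
          exact Or.inl ⟨j, ⟨i, hi, hj⟩, haj⟩
        · exact Or.inr h
      · rintro (⟨j, ⟨i, hi, hR⟩, haj⟩ | h)
        · exact ⟨i, hi, Or.inl ⟨j, hR, haj⟩⟩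
        · exact ⟨hSne.choose, hSne.choose_spec, Or.inr h⟩
    have hdisj : Disjoint (J.biUnion col) dum := by
      rw [disjoint_left]
      intro a ha ha'
      rcases mem_biUnion.mp ha with ⟨j, _, haj⟩
      rw [hcol] at haj
      rcases mem_image.mp haj with ⟨l, _, rfl⟩
      rw [hdum] at ha'
      rcases mem_image.mp ha' with ⟨l', _, h⟩
      exact absurd h (by simp)
    have hcoldisj : ∀ j ∈ J, ∀ j' ∈ J, j ≠ j' → Disjoint (col j) (col j') := by
      intro j _ j' _ hne
      rw [disjoint_left]
      intro a ha ha'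
      rw [hcol] at ha ha'
      rcases mem_image.mp ha with ⟨l, _, rfl⟩
      rcases mem_image.mp ha' with ⟨l', _, h⟩
      simp only [Sum.inl.injEq, Prod.mk.injEq] at h
      exact hne h.1.symm
    have h4 : ((J.biUnion col) ∪ dum).card = ∑ j ∈ J, β j + K := by
      rw [card_union_of_disjoint hdisj, card_biUnion hcoldisj, hdumcard]
      congr 1
      exact Finset.sum_congr rfl (fun j _ => hcolcard j)
    rw [h2, h3, h4]
    exact h1.trans (hcond S)
  obtain ⟨f, hfinj, hf⟩ :=
    (Finset.all_card_le_biUnion_card_iff_existsInjective'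
      (fun x : Σ i : Fin n, Fin (α i) => T x.1)).mp hall
  set cls : (Σ i : Fin n, Fin (α i)) → Option (Fin n) :=
    fun x => (f x).elim (fun p => some p.1) (fun _ => none) with hcls
  set m : Fin n → Fin n → ℕ :=
    fun i j => (univ.filter (fun k : Fin (α i) => cls ⟨i, k⟩ = some j)).card with hm
  set d : Fin n → ℕ :=
    fun i => (univ.filter (fun k : Fin (α i) => cls ⟨i, k⟩ = none)).card with hd
  have hinl : ∀ (x : Σ i : Fin n, Fin (α i)) (j : Fin n),
      cls x = some j → R x.1 j ∧ ∃ l < β j, f x = Sum.inl (j, l) := by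
    intro x j hx
    simp only [hcls] at hx
    rcases hfx : f x with p | l
    · rw [hfx] at hx
      simp only [Sum.elim_inl, Option.some.injEq] at hx
      have hmem := (hmemT x.1 (f x)).mp (hf x)
      rw [hfx] at hmem
      rcases hmem with ⟨j', hR, l, hl, he⟩ | ⟨l, _, he⟩
      · have hpe : p = (j', l) := Sum.inl.inj he
        subst hpe
        simp only at hx
        subst hx
        exact ⟨hR, l, hl, by simp [hfx]⟩
      · exact absurd he (by simp)
    · rw [hfx] at hx; simp at hx
  have hinr : ∀ (x : Σ i : Fin n, Fin (α i)),
      cls x = none → ∃ l < K, f x = Sum.inr l := by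
    intro x hx
    simp only [hcls] at hx
    rcases hfx : f x with p | l
    · rw [hfx] at hx; simp at hx
    · have hmem := (hmemT x.1 (f x)).mp (hf x)
      rw [hfx] at hmem
      rcases hmem with ⟨j', _, l', _, he⟩ | ⟨l', hl', he⟩
      · exact absurd he (by simp)
      · have : l = l' := Sum.inr.inj he
        subst this
        exact ⟨l, hl', by simp [hfx]⟩
  refine ⟨m, d, ?_, ?_, ?_, ?_⟩
  · -- support
    intro i j hR
    rw [hm]
    simp only
    rw [Finset.card_eq_zero, Finset.filter_eq_empty_iff]
    intro k _ hk
    exact hR ((hinl ⟨i, k⟩ j hk).1)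
  · -- row sums
    intro i
    have key := Finset.card_eq_sum_card_fiberwise
      (f := fun k : Fin (α i) => cls ⟨i, k⟩) (s := univ) (t := univ) (fun x _ => mem_univ _)
    rw [card_univ, Fintype.card_fin] at key
    have h2 : ∑ o ∈ (univ : Finset (Option (Fin n))),
        (univ.filter (fun k : Fin (α i) => cls ⟨i, k⟩ = o)).card = (∑ j, m i j) + d i := by
      rw [Fintype.sum_option (fun o =>
        (univ.filter (fun k : Fin (α i) => cls ⟨i, k⟩ = o)).card)]
      exact add_comm _ _
    exact (key.trans h2).symm
  · -- column sums
    intro j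
    have hsig : (∑ i, m i j) = ((univ : Finset (Fin n)).sigma
        (fun i => univ.filter (fun k : Fin (α i) => cls ⟨i, k⟩ = some j))).card := by
      rw [Finset.card_sigma]
    rw [hsig]
    have := Finset.card_le_card_of_injOn
      (f := fun x : Σ i : Fin n, Fin (α i) => (f x).elim (fun p => p.2) id)
      (s := (univ : Finset (Fin n)).sigma
        (fun i => univ.filter (fun k : Fin (α i) => cls ⟨i, k⟩ = some j)))
      (t := range (β j)) ?_ ?_
    · simpa using this
    · intro x hx
      rw [mem_coe, mem_sigma] at hx
      have hcx : cls x = some j := by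
        have := (mem_filter.mp hx.2).2
        simpa [Sigma.eta] using this
      obtain ⟨_, l, hl, hfx⟩ := hinl x j hcx
      simp only [hfx, Sum.elim_inl, mem_coe, mem_range]
      exact hl
    · intro x hx y hy hxy
      rw [Finset.coe_sigma] at hx hy
      have hcx : cls x = some j := by
        rcases hx with ⟨-, h2⟩
        simpa [Sigma.eta] using (mem_filter.mp h2).2
      have hcy : cls y = some j := by
        rcases hy with ⟨-, h2⟩
        simpa [Sigma.eta] using (mem_filter.mp h2).2
      obtain ⟨_, lx, _, hfx⟩ := hinl x j hcx
      obtain ⟨_, ly, _, hfy⟩ := hinl y j hcy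
      apply hfinj
      simp only [hfx, hfy] at hxy ⊢
      simp only [Sum.elim_inl] at hxy
      simp [hxy]
  · -- dummies
    have hsig : (∑ i, d i) = ((univ : Finset (Fin n)).sigma
        (fun i => univ.filter (fun k : Fin (α i) => cls ⟨i, k⟩ = none))).card := by
      rw [Finset.card_sigma]
    rw [hsig]
    have := Finset.card_le_card_of_injOn
      (f := fun x : Σ i : Fin n, Fin (α i) => (f x).elim (fun p => p.2) id)
      (s := (univ : Finset (Fin n)).sigma
        (fun i => univ.filter (fun k : Fin (α i) => cls ⟨i, k⟩ = none)))
      (t := range K) ?_ ?_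
    · simpa using this
    · intro x hx
      rw [mem_coe, mem_sigma] at hx
      have hcx : cls x = none := by
        simpa [Sigma.eta] using (mem_filter.mp hx.2).2
      obtain ⟨l, hl, hfx⟩ := hinr x hcx
      simp only [hfx, Sum.elim_inr, id, mem_coe, mem_range]
      exact hl
    · intro x hx y hy hxy
      rw [Finset.coe_sigma] at hx hy
      have hcx : cls x = none := by
        rcases hx with ⟨-, h2⟩
        simpa [Sigma.eta] using (mem_filter.mp h2).2
      have hcy : cls y = none := by
        rcases hy with ⟨-, h2⟩
        simpa [Sigma.eta] using (mem_filter.mp h2).2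
      obtain ⟨lx, _, hfx⟩ := hinr x hcx
      obtain ⟨ly, _, hfy⟩ := hinr y hcy
      apply hfinj
      simp only [hfx, hfy] at hxy ⊢
      simp only [Sum.elim_inr, id] at hxy
      simp [hxy]
open Finset

lemma exists_real_transport {n : ℕ} (R : Fin n → Fin n → Prop) [DecidableRel R]
    (a b : Fin n → ℝ) (ha : ∀ i, 0 ≤ a i) (hb : ∀ j, 0 ≤ b j)
    (hsa : ∑ i, a i = 1) (hsb : ∑ j, b j = 1)
    (ε : ℝ) (hε : 0 ≤ ε) (θ : ℝ) (hθ : 0 < θ)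
    (hcond : ∀ S : Finset (Fin n),
      ∑ i ∈ S, a i ≤ ∑ j ∈ S.biUnion (fun i => Finset.univ.filter (R i)), b j + ε) :
    ∃ w : Fin n → Fin n → ℝ,
      (∀ i j, 0 ≤ w i j) ∧
      (∀ i, ∑ j, w i j = a i) ∧
      (∀ j, ∑ i, w i j = b j) ∧
      (∑ i, ∑ j, if R i j then (0:ℝ) else w i j) ≤ ε + θ := by
  classical
  obtain ⟨M, hM1, hMθ⟩ : ∃ M : ℕ, 1 ≤ M ∧ (3 * n + 1 : ℝ) ≤ M * θ := by
    refine ⟨max 1 ⌈(3 * n + 1) / θ⌉₊, le_max_left _ _, ?_⟩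
    have h1 : ((3 * n + 1 : ℝ)) / θ ≤ (⌈(3 * n + 1) / θ⌉₊ : ℝ) := Nat.le_ceil _
    have h2 : ((⌈(3 * n + 1) / θ⌉₊ : ℝ)) ≤ ((max 1 ⌈(3 * n + 1) / θ⌉₊ : ℕ) : ℝ) := by
      exact_mod_cast le_max_right _ _
    rw [div_le_iff₀ hθ] at h1
    calc (3 * n + 1 : ℝ) ≤ (⌈(3 * n + 1) / θ⌉₊ : ℝ) * θ := h1
      _ ≤ _ := by apply mul_le_mul_of_nonneg_right h2 hθ.le
  have hM0 : (0:ℝ) < M := by exact_mod_cast hM1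
  set α : Fin n → ℕ := fun i => ⌊(M : ℝ) * a i⌋₊ with hα
  set β : Fin n → ℕ := fun j => ⌊(M : ℝ) * b j⌋₊ with hβ
  set K : ℕ := ⌈(M : ℝ) * ε⌉₊ + n with hK
  have hαle : ∀ i, (α i : ℝ) ≤ M * a i := fun i => Nat.floor_le (mul_nonneg hM0.le (ha i))
  have hαgt : ∀ i, M * a i - 1 < (α i : ℝ) := by
    intro i
    have := Nat.lt_floor_add_one ((M : ℝ) * a i)
    linarith
  have hβle : ∀ j, (β j : ℝ) ≤ M * b j := fun j => Nat.floor_le (mul_nonneg hM0.le (hb j))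
  have hβgt : ∀ j, M * b j - 1 < (β j : ℝ) := by
    intro j
    have := Nat.lt_floor_add_one ((M : ℝ) * b j)
    linarith
  have hKge : (M : ℝ) * ε ≤ (⌈(M : ℝ) * ε⌉₊ : ℕ) := Nat.le_ceil _
  have hKle : (K : ℝ) ≤ M * ε + 1 + n := by
    rw [hK]
    push_cast
    have := Nat.ceil_lt_add_one (by positivity : (0:ℝ) ≤ (M : ℝ) * ε)
    linarith
  have hcondN : ∀ S : Finset (Fin n),
      ∑ i ∈ S, α i ≤ ∑ j ∈ S.biUnion (fun i => univ.filter (R i)), β j + K := by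
    intro S
    have hcast : ((∑ i ∈ S, α i : ℕ) : ℝ) ≤ ((∑ j ∈ S.biUnion (fun i => univ.filter (R i)), β j + K : ℕ) : ℝ) := by
      push_cast
      set J := S.biUnion (fun i => univ.filter (R i)) with hJ
      have hJcard : (J.card : ℝ) ≤ n := by
        have h := card_le_univ J
        simp only [card_univ, Fintype.card_fin] at h
        exact_mod_cast h
      have h1 : ∑ i ∈ S, (α i : ℝ) ≤ M * ∑ i ∈ S, a i := by
        rw [Finset.mul_sum]
        exact Finset.sum_le_sum (fun i _ => hαle i)
      have h2 : (M:ℝ) * ∑ j ∈ J, b j ≤ ∑ j ∈ J, ((β j : ℝ) + 1) := by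
        rw [Finset.mul_sum]
        exact Finset.sum_le_sum (fun j _ => by linarith [hβgt j])
      have h3 : ∑ j ∈ J, ((β j : ℝ) + 1) = (∑ j ∈ J, (β j:ℝ)) + J.card := by
        rw [Finset.sum_add_distrib]
        simp
      have hc := hcond S
      have : (M:ℝ) * (∑ i ∈ S, a i) ≤ M * (∑ j ∈ J, b j + ε) :=
        mul_le_mul_of_nonneg_left hc (by positivity)
      rw [hK]
      push_cast
      rw [mul_add] at this
      calc ∑ i ∈ S, (α i : ℝ) ≤ M * ∑ i ∈ S, a i := h1
        _ ≤ M * ∑ j ∈ J, b j + M * ε := this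
        _ ≤ ((∑ j ∈ J, (β j:ℝ)) + J.card) + M * ε := by rw [← h3]; linarith [h2]
        _ ≤ (∑ j ∈ J, (β j:ℝ)) + ((⌈(M : ℝ) * ε⌉₊ : ℝ) + n) := by linarith [hKge, hJcard]
    exact_mod_cast hcast
  obtain ⟨m, d, hsupp, hrow, hcolN, hdum⟩ := exists_nat_flow R α β K hcondN
  set w₀ : Fin n → Fin n → ℝ := fun i j => (m i j : ℝ) / M with hw₀
  have hw₀nn : ∀ i j, 0 ≤ w₀ i j := fun i j => by positivity
  have hrow₀ : ∀ i, ∑ j, w₀ i j ≤ a i := by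
    intro i
    rw [hw₀]
    simp only
    rw [← Finset.sum_div]
    rw [div_le_iff₀ hM0]
    have h1 : ((∑ j, m i j : ℕ) : ℝ) ≤ (α i : ℝ) := by
      exact_mod_cast Nat.le.intro (hrow i)
    push_cast at h1 ⊢
    calc ∑ j, (m i j:ℝ) ≤ (α i:ℝ) := h1
      _ ≤ M * a i := hαle i
      _ = a i * M := mul_comm _ _
  have hcol₀ : ∀ j, ∑ i, w₀ i j ≤ b j := by
    intro j
    rw [hw₀]
    simp only
    rw [← Finset.sum_div, div_le_iff₀ hM0]
    have h1 : ((∑ i, m i j : ℕ) : ℝ) ≤ (β j : ℝ) := by exact_mod_cast hcolN j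
    push_cast at h1 ⊢
    calc ∑ i, (m i j:ℝ) ≤ (β j:ℝ) := h1
      _ ≤ M * b j := hβle j
      _ = b j * M := mul_comm _ _
  set r : Fin n → ℝ := fun i => a i - ∑ j, w₀ i j with hr
  set c : Fin n → ℝ := fun j => b j - ∑ i, w₀ i j with hc
  have hrnn : ∀ i, 0 ≤ r i := fun i => by simp [hr, hrow₀ i]
  have hcnn : ∀ j, 0 ≤ c j := fun j => by simp [hc, hcol₀ j]
  set s : ℝ := ∑ i, r i with hs
  have hsnn : 0 ≤ s := Finset.sum_nonneg (fun i _ => hrnn i)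
  have htot : ∑ i, ∑ j, w₀ i j = ∑ j, ∑ i, w₀ i j := by rw [Finset.sum_comm]
  have e2 : s = 1 - ∑ i, ∑ j, w₀ i j := by
    simp only [hs, hr]
    rw [Finset.sum_sub_distrib, hsa]
  have hcs : ∑ j, c j = s := by
    have e1 : ∑ j, c j = 1 - ∑ j, ∑ i, w₀ i j := by
      simp only [hc]
      rw [Finset.sum_sub_distrib, hsb]
    rw [e1, e2, htot]
  -- bound on s
  have hsle : s ≤ ε + θ := by
    have h1 : ∑ i, ∑ j, w₀ i j = ((∑ i, ∑ j, m i j : ℕ) : ℝ) / M := by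
      rw [hw₀]
      push_cast
      rw [Finset.sum_div]
      congr 1
      ext i
      rw [Finset.sum_div]
    have h2 : (∑ i, ∑ j, m i j) + ∑ i, d i = ∑ i, α i := by
      rw [← Finset.sum_add_distrib]
      exact Finset.sum_congr rfl (fun i _ => hrow i)
    have h3 : ((∑ i, ∑ j, m i j : ℕ):ℝ) ≥ (∑ i, (α i:ℝ)) - K := by
      have : ((∑ i, ∑ j, m i j : ℕ):ℝ) = (∑ i, (α i : ℝ)) - ((∑ i, d i : ℕ):ℝ) := by
        have := congrArg (fun x : ℕ => (x:ℝ)) h2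
        push_cast at this ⊢
        linarith
      rw [this]
      have : ((∑ i, d i : ℕ):ℝ) ≤ K := by exact_mod_cast hdum
      linarith
    have h4 : (∑ i, (α i:ℝ)) ≥ M - n := by
      have : ∑ i, (M * a i - 1) ≤ ∑ i, (α i:ℝ) :=
        Finset.sum_le_sum (fun i _ => (hαgt i).le)
      rw [Finset.sum_sub_distrib, ← Finset.mul_sum, hsa] at this
      simp at this
      simpa using this
    have hX : ((M:ℝ) - n - K) ≤ ((∑ i, ∑ j, m i j : ℕ):ℝ) := by linarith
    have hgoal : (1 - (ε + θ)) * M ≤ ((∑ i, ∑ j, m i j : ℕ):ℝ) := by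
      nlinarith [hMθ, hKle, Nat.cast_nonneg (α := ℝ) n]
    have hdiv : (1:ℝ) - (ε + θ) ≤ ((∑ i, ∑ j, m i j : ℕ):ℝ) / M := by
      rw [le_div_iff₀ hM0]
      linarith
    rw [e2, h1]
    linarith
  refine ⟨fun i j => w₀ i j + r i * c j / s, ?_, ?_, ?_, ?_⟩
  · intro i j
    have : 0 ≤ r i * c j / s := div_nonneg (mul_nonneg (hrnn i) (hcnn j)) hsnn
    linarith [hw₀nn i j]
  · intro i
    rw [Finset.sum_add_distrib]
    have hsum : ∑ j, r i * c j / s = r i * s / s := by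
      rw [← hcs, Finset.mul_sum, Finset.sum_div]
    rw [hsum]
    rcases eq_or_ne s 0 with h0 | h0
    · have hsum0 : ∑ i, r i = 0 := by rw [← hs]; exact h0
      have hri : r i = 0 :=
        (Finset.sum_eq_zero_iff_of_nonneg (fun i _ => hrnn i)).mp hsum0 i (Finset.mem_univ i)
      have hai : a i - ∑ j, w₀ i j = 0 := by simpa [hr] using hri
      rw [hri]
      simp only [zero_mul, zero_div, add_zero]
      linarith
    · rw [mul_div_assoc, div_self h0, mul_one]
      simp only [hr]
      ring
  · intro j
    rw [Finset.sum_add_distrib]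
    have hsum : ∑ i, r i * c j / s = s * c j / s := by
      rw [hs, Finset.sum_mul, Finset.sum_div]
    rw [hsum]
    rcases eq_or_ne s 0 with h0 | h0
    · have hsum0 : ∑ j, c j = 0 := by rw [hcs]; exact h0
      have hcj : c j = 0 :=
        (Finset.sum_eq_zero_iff_of_nonneg (fun j _ => hcnn j)).mp hsum0 j (Finset.mem_univ j)
      have hbj : b j - ∑ i, w₀ i j = 0 := by simpa [hc] using hcj
      rw [hcj]
      simp only [mul_zero, zero_div, add_zero]
      linarith
    · rw [mul_comm, mul_div_assoc, div_self h0, mul_one]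
      simp only [hc]
      ring
  · have hoff : ∀ i j, (if R i j then (0:ℝ) else w₀ i j + r i * c j / s)
        ≤ (if R i j then (0:ℝ) else w₀ i j) + r i * c j / s := by
      intro i j
      by_cases h : R i j
      · simp only [h, if_true]
        have : 0 ≤ r i * c j / s := div_nonneg (mul_nonneg (hrnn i) (hcnn j)) hsnn
        linarith [hw₀nn i j]
      · simp [h]
    have h1 : ∀ i j, (if R i j then (0:ℝ) else w₀ i j) = 0 := by
      intro i j
      by_cases h : R i j
      · simp [h]
      · simp [h, hw₀, hsupp i j]
    calc ∑ i, ∑ j, (if R i j then (0:ℝ) else w₀ i j + r i * c j / s)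
        ≤ ∑ i, ∑ j, ((if R i j then (0:ℝ) else w₀ i j) + r i * c j / s) := by
          apply Finset.sum_le_sum
          intro i _
          exact Finset.sum_le_sum (fun j _ => hoff i j)
      _ = ∑ i, ∑ j, r i * c j / s := by
          simp only [h1, zero_add]
      _ ≤ ε + θ := by
          have hstep : ∑ i, ∑ j, r i * c j / s = (∑ i, r i) * (∑ j, c j) / s := by
            rw [Finset.sum_mul, Finset.sum_div]
            exact Finset.sum_congr rfl (fun i _ => by rw [Finset.mul_sum, Finset.sum_div])
          rw [hstep, hcs, ← hs]
          rcases eq_or_ne s 0 with h0 | h0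
          · rw [h0]
            simp only [mul_zero, zero_div]
            linarith
          · rw [mul_div_assoc, div_self h0, mul_one]
            exact hsle
open MeasureTheory Set Metric in
lemma wasserstein_le_of_prokhorov {Ω : Type*} [MetricSpace Ω] [CompleteSpace Ω]
    [TopologicalSpace.SeparableSpace Ω] [MeasurableSpace Ω] [BorelSpace Ω]
    (hbdd : Bornology.IsBounded (Set.univ : Set Ω))
    (μ ν : Measure Ω) [IsProbabilityMeasure μ] [IsProbabilityMeasure ν]
    (ε : ℝ) (hε : 0 < ε)
    (hP : ∀ B : Set Ω, MeasurableSet B → (μ B).toReal ≤ (ν (cthickening ε B)).toReal + ε)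
    (δ : ℝ) (hδ : 0 < δ) :
    ∃ J : Measure (Ω × Ω), J.fst = μ ∧ J.snd = ν ∧
      ∫ p, dist p.1 p.2 ∂J ≤ (Metric.diam (Set.univ : Set Ω) + 1) * ε + δ := by
  classical
  have hne : Nonempty Ω := by
    by_contra h
    rw [not_nonempty_iff] at h
    have h1 : μ Set.univ = 1 := measure_univ
    rw [Set.univ_eq_empty_iff.mpr h] at h1
    simp at h1
  set D : ℝ := Metric.diam (Set.univ : Set Ω) with hD
  have hD0 : 0 ≤ D := Metric.diam_nonneg
  set η : ℝ := δ / (7 * (D + 1)) with hη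
  have hη0 : 0 < η := by
    rw [hη]; positivity
  -- dense sequence and partition into small cells
  set u : ℕ → Ω := TopologicalSpace.denseSeq Ω with hu
  have hdense : DenseRange u := TopologicalSpace.denseRange_denseSeq Ω
  set C : ℕ → Set Ω := fun k => ball (u k) η \ ⋃ j < k, ball (u j) η with hC
  have hCmeas : ∀ k, MeasurableSet (C k) := by
    intro k
    exact (measurableSet_ball).diff (MeasurableSet.biUnion (Set.to_countable _)
      (fun j _ => measurableSet_ball))
  have hCsub : ∀ k, C k ⊆ ball (u k) η := fun k => diff_subset
  have hCdiam : ∀ k, diam (C k) ≤ 2 * η := by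
    intro k
    exact le_trans (diam_mono (hCsub k) isBounded_ball) (diam_ball hη0.le)
  have hCdisj : ∀ k l, k ≠ l → Disjoint (C k) (C l) := by
    have key : ∀ k l, k < l → Disjoint (C k) (C l) := by
      intro k l hkl
      rw [Set.disjoint_left]
      intro x hxk hxl
      exact hxl.2 (Set.mem_biUnion hkl (hCsub k hxk))
    intro k l hkl
    rcases lt_or_gt_of_ne hkl with h | h
    · exact key k l h
    · exact (key l k h).symm
  have hCcover : (⋃ k, C k) = Set.univ := by
    apply Set.eq_univ_of_forall
    intro x
    have hex : ∃ k, x ∈ ball (u k) η := by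
      rcases Metric.denseRange_iff.mp hdense x η hη0 with ⟨k, hk⟩
      exact ⟨k, by rwa [mem_ball]⟩
    classical
    have hk := Nat.find_spec hex
    refine Set.mem_iUnion.mpr ⟨Nat.find hex, hk, ?_⟩
    intro hmem
    rcases Set.mem_iUnion.mp hmem with ⟨j, hj⟩
    rcases Set.mem_iUnion.mp hj with ⟨hjlt, hxj⟩
    exact absurd hxj (Nat.find_min hex hjlt)
  -- choose a finite truncation
  set sN : ℕ → Set Ω := fun N => ⋃ k, ⋃ (_ : k < N), C k with hsN
  have hsNmeas : ∀ N, MeasurableSet (sN N) :=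
    fun N => MeasurableSet.biUnion (Set.to_countable _) (fun k _ => hCmeas k)
  have hsNmono : Monotone sN := by
    intro N M hNM
    apply Set.iUnion_mono
    intro k
    exact Set.iUnion_subset (fun h => Set.subset_iUnion_of_subset (h.trans_le hNM) (le_refl _))
  have hsNunion : (⋃ N, sN N) = Set.univ := by
    rw [← hCcover]
    apply Set.Subset.antisymm
    · exact Set.iUnion_subset fun N =>
        Set.iUnion_subset fun k => Set.iUnion_subset fun _ => Set.subset_iUnion _ k
    · exact Set.iUnion_subset fun k =>
        Set.subset_iUnion_of_subset (k+1) (Set.subset_iUnion_of_subset k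
          (Set.subset_iUnion_of_subset (Nat.lt_succ_self k) (le_refl _)))
  have htend : ∀ (ρ : Measure Ω) [IsProbabilityMeasure ρ],
      Filter.Tendsto (fun N => (ρ (sN N)).toReal) Filter.atTop (nhds 1) := by
    intro ρ _
    have h1 := MeasureTheory.tendsto_measure_iUnion_atTop (μ := ρ) hsNmono
    rw [hsNunion, measure_univ] at h1
    have h2 := (ENNReal.tendsto_toReal (by simp : (1:ENNReal) ≠ ⊤)).comp h1
    exact h2
  have hev : ∀ᶠ N in Filter.atTop,
      1 - η < (μ (sN N)).toReal ∧ 1 - η < (ν (sN N)).toReal := by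
    have h1 := (htend μ).eventually (eventually_gt_nhds (by linarith : 1 - η < 1))
    have h2 := (htend ν).eventually (eventually_gt_nhds (by linarith : 1 - η < 1))
    exact h1.and h2
  obtain ⟨N, hN⟩ := hev.exists
  -- the finite partition
  set n : ℕ := N + 1 with hn
  set A : Fin n → Set Ω := fun i => if (i : ℕ) < N then C i else (sN N)ᶜ with hA
  have hAmeas : ∀ i, MeasurableSet (A i) := by
    intro i
    rw [hA]
    by_cases h : (i : ℕ) < N
    · simp only [h, if_true]; exact hCmeas i
    · simp only [h, if_false]; exact (hsNmeas N).compl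
  have hAlt : ∀ i : Fin n, (i : ℕ) < N → A i = C i := by
    intro i h; rw [hA]; simp [h]
  have hAlast : ∀ i : Fin n, ¬ (i : ℕ) < N → A i = (sN N)ᶜ := by
    intro i h; rw [hA]; simp [h]
  have hlast_eq : ∀ i j : Fin n, ¬ (i : ℕ) < N → ¬ (j : ℕ) < N → i = j := by
    intro i j hi hj
    have h1 : (i : ℕ) = N := le_antisymm (Nat.lt_succ_iff.mp i.isLt) (not_lt.mp hi)
    have h2 : (j : ℕ) = N := le_antisymm (Nat.lt_succ_iff.mp j.isLt) (not_lt.mp hj)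
    exact Fin.ext (h1.trans h2.symm)
  have hCsubsN : ∀ k, k < N → C k ⊆ sN N := by
    intro k hk
    exact Set.subset_iUnion_of_subset k (Set.subset_iUnion_of_subset hk (le_refl _))
  have hAdisj : (Set.univ : Set (Fin n)).PairwiseDisjoint A := by
    intro i _ j _ hij
    by_cases hi : (i : ℕ) < N
    · by_cases hj : (j : ℕ) < N
      · rw [Function.onFun, hAlt i hi, hAlt j hj]
        exact hCdisj i j (fun h => hij (Fin.ext h))
      · rw [Function.onFun, hAlt i hi, hAlast j hj]
        exact Set.disjoint_compl_right_iff_subset.mpr (hCsubsN i hi)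
    · by_cases hj : (j : ℕ) < N
      · rw [Function.onFun, hAlast i hi, hAlt j hj]
        exact (Set.disjoint_compl_right_iff_subset.mpr (hCsubsN j hj)).symm
      · exact absurd (hlast_eq i j hi hj) hij
  have hAcover : (⋃ i, A i) = Set.univ := by
    apply Set.eq_univ_of_forall
    intro x
    by_cases hx : x ∈ sN N
    · rcases Set.mem_iUnion.mp hx with ⟨k, hk⟩
      rcases Set.mem_iUnion.mp hk with ⟨hkN, hxk⟩
      refine Set.mem_iUnion.mpr ⟨⟨k, hkN.trans (Nat.lt_succ_self N)⟩, ?_⟩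
      rw [hAlt _ hkN]
      exact hxk
    · refine Set.mem_iUnion.mpr ⟨⟨N, Nat.lt_succ_self N⟩, ?_⟩
      rw [hAlast _ (by simp)]
      exact hx
  -- masses
  set a : Fin n → ℝ := fun i => (μ (A i)).toReal with ha'
  set b : Fin n → ℝ := fun j => (ν (A j)).toReal with hb'
  have hann : ∀ i, 0 ≤ a i := fun i => ENNReal.toReal_nonneg
  have hbnn : ∀ j, 0 ≤ b j := fun j => ENNReal.toReal_nonneg
  have huniv_eq : (⋃ i ∈ (Finset.univ : Finset (Fin n)), A i) = Set.univ := by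
    rw [← hAcover]; simp
  have hsum : ∀ (ρ : Measure Ω) [IsProbabilityMeasure ρ], ∑ i, (ρ (A i)).toReal = 1 := by
    intro ρ _
    have h1 : ∑ i ∈ Finset.univ, ρ (A i) = ρ (⋃ i ∈ Finset.univ, A i) :=
      (measure_biUnion_finset (by simpa using hAdisj) (fun i _ => hAmeas i)).symm
    have h3 : ∑ i ∈ (Finset.univ : Finset (Fin n)), ρ (A i) = 1 := by
      rw [h1, huniv_eq, measure_univ]
    rw [← ENNReal.toReal_sum (fun i _ => measure_ne_top ρ _), h3, ENNReal.toReal_one]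
  have hsa : ∑ i, a i = 1 := hsum μ
  have hsb : ∑ j, b j = 1 := hsum ν
  have hcompl : ∀ (ρ : Measure Ω) [IsProbabilityMeasure ρ],
      1 - η < (ρ (sN N)).toReal → (ρ ((sN N)ᶜ)).toReal ≤ η := by
    intro ρ _ hρ
    rw [prob_compl_eq_one_sub (hsNmeas N),
      ENNReal.toReal_sub_of_le prob_le_one ENNReal.one_ne_top, ENNReal.toReal_one]
    linarith
  have halast : ∀ i : Fin n, ¬ (i : ℕ) < N → a i ≤ η := by
    intro i h
    simp only [ha', hAlast i h]
    exact hcompl μ hN.1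
  have hblast : ∀ i : Fin n, ¬ (i : ℕ) < N → b i ≤ η := by
    intro i h
    simp only [hb', hAlast i h]
    exact hcompl ν hN.2
  -- the relation
  set R : Fin n → Fin n → Prop := fun i j => (i : ℕ) < N ∧ (j : ℕ) < N ∧
      ∃ x ∈ A i, ∃ y ∈ A j, dist x y ≤ ε + η with hR
  letI : DecidableRel R := Classical.decRel R
  -- Hall condition
  have hcond : ∀ S : Finset (Fin n), ∑ i ∈ S, a i ≤
      ∑ j ∈ S.biUnion (fun i => Finset.univ.filter (R i)), b j + (ε + 2*η) := by
    intro S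
    set S' := S.filter (fun i : Fin n => (i : ℕ) < N) with hS'
    set B : Set Ω := ⋃ i ∈ S', A i with hB
    have hBmeas : MeasurableSet B := (S' : Finset (Fin n)).measurableSet_biUnion
      (fun i _ => hAmeas i)
    have h1 : ∑ i ∈ S, a i ≤ (∑ i ∈ S', a i) + η := by
      rw [← Finset.sum_filter_add_sum_filter_not S (fun i : Fin n => (i : ℕ) < N)]
      have h2 : ∑ i ∈ S.filter (fun i : Fin n => ¬ (i : ℕ) < N), a i ≤ η := by
        by_cases hc : (S.filter (fun i : Fin n => ¬ (i : ℕ) < N)).Nonempty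
        · obtain ⟨i0, hi0⟩ := hc
          have heq : S.filter (fun i : Fin n => ¬ (i : ℕ) < N) = {i0} := by
            apply Finset.eq_singleton_iff_unique_mem.mpr
            exact ⟨hi0, fun j hj => hlast_eq j i0 (Finset.mem_filter.mp hj).2
              (Finset.mem_filter.mp hi0).2⟩
          rw [heq, Finset.sum_singleton]
          exact halast i0 (Finset.mem_filter.mp hi0).2
        · rw [Finset.not_nonempty_iff_eq_empty.mp hc]
          simp
          linarith
      linarith
    have h2 : (μ B).toReal = ∑ i ∈ S', a i := by
      rw [hB, measure_biUnion_finset (hAdisj.subset (Set.subset_univ _))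
        (fun i _ => hAmeas i)]
      rw [ENNReal.toReal_sum (fun i _ => measure_ne_top μ _)]
    have h3 := hP B hBmeas
    set T' := S'.biUnion (fun i => Finset.univ.filter (R i)) with hT'
    have h4 : (ν (cthickening ε B)).toReal ≤ (∑ j ∈ T', b j) + η := by
      have hsub : cthickening ε B ⊆ (⋃ j ∈ T', A j) ∪ (sN N)ᶜ := by
        intro y hy
        have hyA : ∃ j : Fin n, y ∈ A j := by
          have : y ∈ ⋃ i, A i := by rw [hAcover]; trivial
          exact Set.mem_iUnion.mp this
        obtain ⟨j, hyj⟩ := hyA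
        by_cases hjN : (j : ℕ) < N
        · left
          have hth : y ∈ thickening (ε + η) B :=
            cthickening_subset_thickening' (by linarith) (by linarith) B hy
          rcases Metric.mem_thickening_iff.mp hth with ⟨x, hxB, hxy⟩
          rcases Set.mem_iUnion.mp hxB with ⟨i, hi⟩
          rcases Set.mem_iUnion.mp hi with ⟨hiS', hxi⟩
          have hiN : (i : ℕ) < N := (Finset.mem_filter.mp hiS').2
          have hRij : R i j := ⟨hiN, hjN, x, hxi, y, hyj, by
            rw [dist_comm] at hxy; exact hxy.le⟩
          exact Set.mem_biUnion (Finset.mem_coe.mpr (Finset.mem_biUnion.mpr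
            ⟨i, hiS', Finset.mem_filter.mpr ⟨Finset.mem_univ _, hRij⟩⟩)) hyj
        · right
          rw [hAlast j hjN] at hyj
          exact hyj
      have hle : ν (cthickening ε B) ≤ (∑ j ∈ T', ν (A j)) + ν ((sN N)ᶜ) := by
        calc ν (cthickening ε B) ≤ ν ((⋃ j ∈ T', A j) ∪ (sN N)ᶜ) := measure_mono hsub
          _ ≤ ν (⋃ j ∈ T', A j) + ν ((sN N)ᶜ) := measure_union_le _ _
          _ = (∑ j ∈ T', ν (A j)) + ν ((sN N)ᶜ) := by
              rw [measure_biUnion_finset (hAdisj.subset (Set.subset_univ _))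
                (fun j _ => hAmeas j)]
      have hfin : ((∑ j ∈ T', ν (A j)) + ν ((sN N)ᶜ)) ≠ ⊤ := by
        apply ENNReal.add_ne_top.mpr
        constructor
        · exact (ENNReal.sum_lt_top.mpr (fun j _ => measure_lt_top ν _)).ne
        · exact measure_ne_top ν _
      have := ENNReal.toReal_mono hfin hle
      rw [ENNReal.toReal_add ((ENNReal.sum_lt_top.mpr (fun j _ => measure_lt_top ν _)).ne)
        (measure_ne_top ν _), ENNReal.toReal_sum (fun j _ => measure_ne_top ν _)] at this
      have hc2 : (ν ((sN N)ᶜ)).toReal ≤ η := hcompl ν hN.2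
      calc (ν (cthickening ε B)).toReal
          ≤ (∑ j ∈ T', (ν (A j)).toReal) + (ν ((sN N)ᶜ)).toReal := this
        _ ≤ (∑ j ∈ T', b j) + η := by
            apply add_le_add _ hc2
            exact le_of_eq rfl
    have h5 : ∑ j ∈ T', b j ≤ ∑ j ∈ S.biUnion (fun i => Finset.univ.filter (R i)), b j := by
      apply Finset.sum_le_sum_of_subset_of_nonneg
      · exact Finset.biUnion_subset_biUnion_of_subset_left _ (Finset.filter_subset _ _)
      · intro j _ _
        exact hbnn j
    calc ∑ i ∈ S, a i ≤ (∑ i ∈ S', a i) + η := h1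
      _ = (μ B).toReal + η := by rw [h2]
      _ ≤ (ν (cthickening ε B)).toReal + ε + η := by linarith
      _ ≤ ((∑ j ∈ T', b j) + η) + ε + η := by linarith
      _ ≤ ∑ j ∈ S.biUnion (fun i => Finset.univ.filter (R i)), b j + (ε + 2*η) := by
          linarith
  -- apply the finite transport lemma
  obtain ⟨w, hwnn, hwrow, hwcol, hwoff⟩ := exists_real_transport R a b hann hbnn hsa hsb
    (ε + 2*η) (by linarith) η hη0 hcond
  -- bounds relating w to masses
  have hwle_a : ∀ i j, w i j ≤ a i := by
    intro i j
    rw [← hwrow i]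
    exact Finset.single_le_sum (fun j _ => hwnn i j) (Finset.mem_univ j)
  have hwle_b : ∀ i j, w i j ≤ b j := by
    intro i j
    rw [← hwcol j]
    exact Finset.single_le_sum (fun i _ => hwnn i j) (Finset.mem_univ i)
  -- construct the coupling
  set cf : Fin n × Fin n → ENNReal :=
    fun p => ENNReal.ofReal (w p.1 p.2) / (μ (A p.1) * ν (A p.2)) with hcf
  set Pr : Fin n × Fin n → Measure (Ω × Ω) :=
    fun p => (μ.restrict (A p.1)).prod (ν.restrict (A p.2)) with hPr
  set J : Measure (Ω × Ω) := ∑ p ∈ Finset.univ, cf p • Pr p with hJdef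
  have hdeg : ∀ p : Fin n × Fin n, w p.1 p.2 ≠ 0 →
      μ (A p.1) ≠ 0 ∧ ν (A p.2) ≠ 0 := by
    intro p hw
    have hwpos : 0 < w p.1 p.2 := lt_of_le_of_ne (hwnn _ _) (Ne.symm hw)
    constructor
    · intro h0
      have : a p.1 = 0 := by simp only [ha']; simp [h0]
      linarith [hwle_a p.1 p.2]
    · intro h0
      have : b p.2 = 0 := by simp only [hb']; simp [h0]
      linarith [hwle_b p.1 p.2]
  have hcf_ne_top : ∀ p : Fin n × Fin n, cf p ≠ ⊤ := by
    intro p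
    rw [hcf]
    by_cases hw : w p.1 p.2 = 0
    · simp [hw]
    · obtain ⟨h1, h2⟩ := hdeg p hw
      exact (ENNReal.div_lt_top ENNReal.ofReal_ne_top (mul_ne_zero h1 h2)).ne
  have hcfmul : ∀ p : Fin n × Fin n, cf p * (μ (A p.1) * ν (A p.2)) =
      ENNReal.ofReal (w p.1 p.2) := by
    intro p
    by_cases hw : w p.1 p.2 = 0
    · simp only [hcf]; simp [hw]
    · obtain ⟨h1, h2⟩ := hdeg p hw
      simp only [hcf]
      exact ENNReal.div_mul_cancel (mul_ne_zero h1 h2)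
        (ENNReal.mul_ne_top (measure_ne_top μ _) (measure_ne_top ν _))
  -- first marginal
  have hfst : J.fst = μ := by
    apply Measure.ext
    intro s hs
    rw [Measure.fst_apply hs, hJdef, Measure.finset_sum_apply]
    have hterm : ∀ p : Fin n × Fin n, (cf p • Pr p) (Prod.fst ⁻¹' s) =
        ENNReal.ofReal (w p.1 p.2) * ((μ (A p.1))⁻¹ * μ (s ∩ A p.1)) := by
      intro p
      rw [Measure.smul_apply, smul_eq_mul]
      simp only [hPr]
      have hpre : (Prod.fst ⁻¹' s : Set (Ω × Ω)) = s ×ˢ Set.univ := Set.prod_univ.symm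
      rw [hpre, Measure.prod_prod, Measure.restrict_apply hs, Measure.restrict_apply_univ]
      by_cases hw : w p.1 p.2 = 0
      · simp only [hcf]; simp [hw]
      · obtain ⟨h1, h2⟩ := hdeg p hw
        simp only [hcf]
        rw [div_eq_mul_inv,
          ENNReal.mul_inv (Or.inl h1) (Or.inr h2)]
        have hq : (ν (A p.2))⁻¹ * ν (A p.2) = 1 :=
          ENNReal.inv_mul_cancel h2 (measure_ne_top ν _)
        calc ENNReal.ofReal (w p.1 p.2) * ((μ (A p.1))⁻¹ * (ν (A p.2))⁻¹) *
              (μ (s ∩ A p.1) * ν (A p.2))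
            = ENNReal.ofReal (w p.1 p.2) * ((μ (A p.1))⁻¹ * μ (s ∩ A p.1)) *
              ((ν (A p.2))⁻¹ * ν (A p.2)) := by ring
          _ = ENNReal.ofReal (w p.1 p.2) * ((μ (A p.1))⁻¹ * μ (s ∩ A p.1)) := by
              rw [hq, mul_one]
    rw [Finset.sum_congr rfl (fun p _ => hterm p)]
    rw [Fintype.sum_prod_type]
    have hinner : ∀ i : Fin n,
        ∑ j, ENNReal.ofReal (w i j) * ((μ (A i))⁻¹ * μ (s ∩ A i)) = μ (s ∩ A i) := by
      intro i
      rw [← Finset.sum_mul]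
      rw [← ENNReal.ofReal_sum_of_nonneg (fun j _ => hwnn i j), hwrow i]
      have hofa : ENNReal.ofReal (a i) = μ (A i) := by
        simp only [ha']
        exact ENNReal.ofReal_toReal (measure_ne_top μ _)
      rw [hofa]
      rcases eq_or_ne (μ (A i)) 0 with h0 | h0
      · have hX : μ (s ∩ A i) = 0 := measure_mono_null Set.inter_subset_right h0
        simp [h0, hX]
      · rw [← mul_assoc, ENNReal.mul_inv_cancel h0 (measure_ne_top μ _), one_mul]
    rw [Finset.sum_congr rfl (fun i _ => hinner i)]
    have hdisj2 : (↑(Finset.univ : Finset (Fin n)) : Set (Fin n)).PairwiseDisjoint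
        (fun i => s ∩ A i) := by
      intro i hi j hj hij
      exact Set.disjoint_of_subset Set.inter_subset_right Set.inter_subset_right
        (hAdisj (Set.mem_univ i) (Set.mem_univ j) hij)
    rw [← measure_biUnion_finset hdisj2 (fun i _ => hs.inter (hAmeas i))]
    congr 1
    have huniv2 : (⋃ i ∈ (Finset.univ : Finset (Fin n)), s ∩ A i) = ⋃ i, s ∩ A i := by simp
    rw [huniv2, ← Set.inter_iUnion, hAcover, Set.inter_univ]
  -- second marginal
  have hsnd : J.snd = ν := by
    apply Measure.ext
    intro s hs
    rw [Measure.snd_apply hs, hJdef, Measure.finset_sum_apply]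
    have hterm : ∀ p : Fin n × Fin n, (cf p • Pr p) (Prod.snd ⁻¹' s) =
        ENNReal.ofReal (w p.1 p.2) * ((ν (A p.2))⁻¹ * ν (s ∩ A p.2)) := by
      intro p
      rw [Measure.smul_apply, smul_eq_mul]
      simp only [hPr]
      have hpre : (Prod.snd ⁻¹' s : Set (Ω × Ω)) = Set.univ ×ˢ s := Set.univ_prod.symm
      rw [hpre, Measure.prod_prod, Measure.restrict_apply hs, Measure.restrict_apply_univ]
      by_cases hw : w p.1 p.2 = 0
      · simp only [hcf]; simp [hw]
      · obtain ⟨h1, h2⟩ := hdeg p hw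
        simp only [hcf]
        rw [div_eq_mul_inv,
          ENNReal.mul_inv (Or.inl h1) (Or.inr h2)]
        have hq : (μ (A p.1))⁻¹ * μ (A p.1) = 1 :=
          ENNReal.inv_mul_cancel h1 (measure_ne_top μ _)
        calc ENNReal.ofReal (w p.1 p.2) * ((μ (A p.1))⁻¹ * (ν (A p.2))⁻¹) *
              (μ (A p.1) * ν (s ∩ A p.2))
            = ENNReal.ofReal (w p.1 p.2) * ((ν (A p.2))⁻¹ * ν (s ∩ A p.2)) *
              ((μ (A p.1))⁻¹ * μ (A p.1)) := by ring
          _ = ENNReal.ofReal (w p.1 p.2) * ((ν (A p.2))⁻¹ * ν (s ∩ A p.2)) := by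
              rw [hq, mul_one]
    rw [Finset.sum_congr rfl (fun p _ => hterm p)]
    rw [Fintype.sum_prod_type_right]
    have hinner : ∀ j : Fin n,
        ∑ i, ENNReal.ofReal (w i j) * ((ν (A j))⁻¹ * ν (s ∩ A j)) = ν (s ∩ A j) := by
      intro j
      rw [← Finset.sum_mul]
      rw [← ENNReal.ofReal_sum_of_nonneg (fun i _ => hwnn i j), hwcol j]
      have hofb : ENNReal.ofReal (b j) = ν (A j) := by
        simp only [hb']
        exact ENNReal.ofReal_toReal (measure_ne_top ν _)
      rw [hofb]
      rcases eq_or_ne (ν (A j)) 0 with h0 | h0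
      · have hX : ν (s ∩ A j) = 0 := measure_mono_null Set.inter_subset_right h0
        simp [h0, hX]
      · rw [← mul_assoc, ENNReal.mul_inv_cancel h0 (measure_ne_top ν _), one_mul]
    rw [Finset.sum_congr rfl (fun j _ => hinner j)]
    have hdisj2 : (↑(Finset.univ : Finset (Fin n)) : Set (Fin n)).PairwiseDisjoint
        (fun j => s ∩ A j) := by
      intro i hi j hj hij
      exact Set.disjoint_of_subset Set.inter_subset_right Set.inter_subset_right
        (hAdisj (Set.mem_univ i) (Set.mem_univ j) hij)
    rw [← measure_biUnion_finset hdisj2 (fun j _ => hs.inter (hAmeas j))]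
    congr 1
    have huniv2 : (⋃ j ∈ (Finset.univ : Finset (Fin n)), s ∩ A j) = ⋃ j, s ∩ A j := by simp
    rw [huniv2, ← Set.inter_iUnion, hAcover, Set.inter_univ]
  -- integrability
  have hIone : ∀ (ρ : Measure (Ω × Ω)) [IsFiniteMeasure ρ],
      Integrable (fun p : Ω × Ω => dist p.1 p.2) ρ := by
    intro ρ _
    apply MeasureTheory.Integrable.mono' (integrable_const D)
    · exact (continuous_fst.dist continuous_snd).aestronglyMeasurable
    · filter_upwards with p
      rw [Real.norm_eq_abs, abs_of_nonneg dist_nonneg]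
      exact dist_le_diam_of_mem hbdd (Set.mem_univ _) (Set.mem_univ _)
  -- the integral bound
  set Cp : Fin n × Fin n → ℝ := fun p => if R p.1 p.2 then ε + 5*η else D with hCp
  have hCpnn : ∀ p, 0 ≤ Cp p := by
    intro p
    simp only [hCp]
    by_cases h : R p.1 p.2
    · rw [if_pos h]; linarith
    · rw [if_neg h]; exact hD0
  have hIJ : ∫ p, dist p.1 p.2 ∂J =
      ∑ p : Fin n × Fin n, (cf p).toReal * ∫ q, dist q.1 q.2 ∂(Pr p) := by
    rw [hJdef]
    rw [integral_finset_sum_measure (fun p _ => (hIone (Pr p)).smul_measure (hcf_ne_top p))]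
    exact Finset.sum_congr rfl (fun p _ => by rw [integral_smul_measure, smul_eq_mul])
  have hcell : ∀ p : Fin n × Fin n, ∀ q : Ω × Ω, q ∈ A p.1 ×ˢ A p.2 →
      dist q.1 q.2 ≤ Cp p := by
    intro p q hq
    simp only [hCp]
    by_cases hRp : R p.1 p.2
    · rw [if_pos hRp]
      obtain ⟨hiN, hjN, x₀, hx₀, y₀, hy₀, hxy₀⟩ := hRp
      rw [hAlt _ hiN] at hx₀
      rw [hAlt _ hjN] at hy₀
      have hq1 : q.1 ∈ C (p.1 : ℕ) := by
        have := hq.1; rwa [hAlt _ hiN] at this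
      have hq2 : q.2 ∈ C (p.2 : ℕ) := by
        have := hq.2; rwa [hAlt _ hjN] at this
      have hb1 : Bornology.IsBounded (C (p.1 : ℕ)) := isBounded_ball.subset (hCsub _)
      have hb2 : Bornology.IsBounded (C (p.2 : ℕ)) := isBounded_ball.subset (hCsub _)
      have d1 : dist q.1 x₀ ≤ 2*η :=
        (dist_le_diam_of_mem hb1 hq1 hx₀).trans (hCdiam _)
      have d2 : dist y₀ q.2 ≤ 2*η :=
        (dist_le_diam_of_mem hb2 hy₀ hq2).trans (hCdiam _)
      calc dist q.1 q.2 ≤ dist q.1 x₀ + dist x₀ y₀ + dist y₀ q.2 := dist_triangle4 _ _ _ _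
        _ ≤ 2*η + (ε + η) + 2*η := by linarith
        _ = ε + 5*η := by ring
    · rw [if_neg hRp]
      exact dist_le_diam_of_mem hbdd (Set.mem_univ _) (Set.mem_univ _)
  have hterm_bound : ∀ p : Fin n × Fin n,
      (cf p).toReal * ∫ q, dist q.1 q.2 ∂(Pr p) ≤ Cp p * w p.1 p.2 := by
    intro p
    have hi1 : ∫ q, dist q.1 q.2 ∂(Pr p) ≤
        ((μ (A p.1)) * (ν (A p.2))).toReal * Cp p := by
      simp only [hPr]
      rw [Measure.prod_restrict]
      have hmeas : MeasurableSet (A p.1 ×ˢ A p.2) := (hAmeas p.1).prod (hAmeas p.2)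
      have := setIntegral_mono_on (μ := μ.prod ν) (s := A p.1 ×ˢ A p.2)
        (f := fun q : Ω × Ω => dist q.1 q.2) (g := fun _ => Cp p)
        (hIone _) (integrableOn_const (measure_ne_top _ _)) hmeas
        (fun q hq => hcell p q hq)
      rw [setIntegral_const, smul_eq_mul, measureReal_def, Measure.prod_prod] at this
      exact this
    calc (cf p).toReal * ∫ q, dist q.1 q.2 ∂(Pr p)
        ≤ (cf p).toReal * (((μ (A p.1)) * (ν (A p.2))).toReal * Cp p) :=
          mul_le_mul_of_nonneg_left hi1 ENNReal.toReal_nonneg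
      _ = ((cf p) * ((μ (A p.1)) * (ν (A p.2)))).toReal * Cp p := by
          simp only [ENNReal.toReal_mul]
          ring
      _ = w p.1 p.2 * Cp p := by
          rw [hcfmul p, ENNReal.toReal_ofReal (hwnn _ _)]
      _ = Cp p * w p.1 p.2 := mul_comm _ _
  have hsplit : ∑ p : Fin n × Fin n, Cp p * w p.1 p.2 ≤
      (ε + 5*η) * 1 + D * (ε + 3*η) := by
    have hpt : ∀ p : Fin n × Fin n, Cp p * w p.1 p.2 =
        (ε + 5*η) * (if R p.1 p.2 then w p.1 p.2 else 0) +
        D * (if R p.1 p.2 then 0 else w p.1 p.2) := by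
      intro p
      simp only [hCp]
      by_cases h : R p.1 p.2
      · rw [if_pos h, if_pos h, if_pos h]; ring
      · rw [if_neg h, if_neg h, if_neg h]; ring
    rw [Finset.sum_congr rfl (fun p _ => hpt p), Finset.sum_add_distrib,
      ← Finset.mul_sum, ← Finset.mul_sum]
    have hfirst : ∑ p : Fin n × Fin n, (if R p.1 p.2 then w p.1 p.2 else 0) ≤ 1 := by
      calc ∑ p : Fin n × Fin n, (if R p.1 p.2 then w p.1 p.2 else 0)
          ≤ ∑ p : Fin n × Fin n, w p.1 p.2 := by
            apply Finset.sum_le_sum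
            intro p _
            by_cases h : R p.1 p.2
            · rw [if_pos h]
            · rw [if_neg h]; exact hwnn _ _
        _ = ∑ i, ∑ j, w i j := by rw [Fintype.sum_prod_type]
        _ = ∑ i, a i := Finset.sum_congr rfl (fun i _ => hwrow i)
        _ = 1 := hsa
    have hsecond : ∑ p : Fin n × Fin n, (if R p.1 p.2 then 0 else w p.1 p.2) ≤ ε + 3*η := by
      have : ∑ p : Fin n × Fin n, (if R p.1 p.2 then (0:ℝ) else w p.1 p.2) =
          ∑ i, ∑ j, (if R i j then (0:ℝ) else w i j) := by rw [Fintype.sum_prod_type]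
      rw [this]
      linarith [hwoff]
    have e1 : (ε + 5*η) * ∑ p : Fin n × Fin n, (if R p.1 p.2 then w p.1 p.2 else 0)
        ≤ (ε + 5*η) * 1 := by
      apply mul_le_mul_of_nonneg_left hfirst
      linarith
    have e2 : D * ∑ p : Fin n × Fin n, (if R p.1 p.2 then 0 else w p.1 p.2)
        ≤ D * (ε + 3*η) := by
      apply mul_le_mul_of_nonneg_left hsecond hD0
    linarith
  refine ⟨J, hfst, hsnd, ?_⟩
  have h7 : 7 * (D + 1) * η = δ := by
    rw [hη]
    field_simp
  have hfinal : ∫ p, dist p.1 p.2 ∂J ≤ (ε + 5*η) * 1 + D * (ε + 3*η) := by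
    rw [hIJ]
    exact (Finset.sum_le_sum (fun p _ => hterm_bound p)).trans hsplit
  have hD1 : (5 + 3*D) * η ≤ 7 * (D + 1) * η := by
    apply mul_le_mul_of_nonneg_right _ hη0.le
    linarith
  calc ∫ p, dist p.1 p.2 ∂J ≤ (ε + 5*η) * 1 + D * (ε + 3*η) := hfinal
    _ = (D + 1) * ε + (5 + 3*D) * η := by ring
    _ ≤ (D + 1) * ε + δ := by
        rw [← h7]
        linarith
open MeasureTheory Set Metric

/-- On a complete separable metric space of finite diameter, the Prokhorov metric `d_P` and
the Wasserstein metric `d_W` satisfy `d_P² ≤ d_W ≤ (diam Ω + 1) d_P`. -/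
theorem prokhorov_sq_le_wasserstein_le (Ω : Type*) [MetricSpace Ω] [CompleteSpace Ω]
    [TopologicalSpace.SeparableSpace Ω] [MeasurableSpace Ω] [BorelSpace Ω]
    (hbdd : Bornology.IsBounded (Set.univ : Set Ω))
    (μ ν : Measure Ω) [IsProbabilityMeasure μ] [IsProbabilityMeasure ν] :
    (sInf {ε : ℝ | 0 < ε ∧ ∀ B : Set Ω, MeasurableSet B →
        (μ B).toReal ≤ (ν (cthickening ε B)).toReal + ε}) ^ 2
      ≤ sInf {r : ℝ | ∃ J : Measure (Ω × Ω), J.fst = μ ∧ J.snd = ν ∧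
          r = ∫ p, dist p.1 p.2 ∂J} ∧
    sInf {r : ℝ | ∃ J : Measure (Ω × Ω), J.fst = μ ∧ J.snd = ν ∧
          r = ∫ p, dist p.1 p.2 ∂J}
      ≤ (Metric.diam (Set.univ : Set Ω) + 1) *
        sInf {ε : ℝ | 0 < ε ∧ ∀ B : Set Ω, MeasurableSet B →
          (μ B).toReal ≤ (ν (cthickening ε B)).toReal + ε} := by
  classical
  set D : ℝ := Metric.diam (Set.univ : Set Ω) with hD
  have hD0 : 0 ≤ D := Metric.diam_nonneg
  set Pset : Set ℝ := {ε : ℝ | 0 < ε ∧ ∀ B : Set Ω, MeasurableSet B →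
      (μ B).toReal ≤ (ν (cthickening ε B)).toReal + ε} with hPset
  set Wset : Set ℝ := {r : ℝ | ∃ J : Measure (Ω × Ω), J.fst = μ ∧ J.snd = ν ∧
      r = ∫ p, dist p.1 p.2 ∂J} with hWset
  have hWne : Wset.Nonempty :=
    ⟨∫ p, dist p.1 p.2 ∂(μ.prod ν), μ.prod ν, Measure.fst_prod, Measure.snd_prod, rfl⟩
  have hWlb : ∀ r ∈ Wset, 0 ≤ r := by
    rintro r ⟨J, hJf, hJs, rfl⟩
    exact integral_nonneg (fun p => dist_nonneg)
  have hPne : (1:ℝ) ∈ Pset := by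
    refine ⟨one_pos, fun B hB => ?_⟩
    have h1 : (μ B).toReal ≤ 1 := by
      have := prob_le_one (μ := μ) (s := B)
      calc (μ B).toReal ≤ (1 : ENNReal).toReal :=
            ENNReal.toReal_mono ENNReal.one_ne_top this
        _ = 1 := ENNReal.toReal_one
    linarith [ENNReal.toReal_nonneg (a := ν (cthickening 1 B))]
  have hPbdd : BddBelow Pset := ⟨0, fun x hx => hx.1.le⟩
  have hWbdd : BddBelow Wset := ⟨0, hWlb⟩
  have hPnn : 0 ≤ sInf Pset := Real.sInf_nonneg (fun x hx => hx.1.le)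
  constructor
  · -- d_P² ≤ d_W
    apply le_csInf hWne
    rintro r ⟨J, hJf, hJs, hre⟩
    haveI hJprob : IsProbabilityMeasure J := by
      constructor
      have h : J.fst Set.univ = 1 := by rw [hJf]; exact measure_univ
      rwa [Measure.fst_apply MeasurableSet.univ, Set.preimage_univ] at h
    have hint : Integrable (fun p : Ω × Ω => dist p.1 p.2) J := by
      apply MeasureTheory.Integrable.mono' (integrable_const D)
      · exact (continuous_fst.dist continuous_snd).aestronglyMeasurable
      · filter_upwards with p
        rw [Real.norm_eq_abs, abs_of_nonneg dist_nonneg]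
        exact dist_le_diam_of_mem hbdd (Set.mem_univ _) (Set.mem_univ _)
    have hr0 : 0 ≤ r := hre ▸ integral_nonneg (fun p => dist_nonneg)
    have key : ∀ t : ℝ, 0 < t → Real.sqrt r + t ∈ Pset := by
      intro t ht
      set ε : ℝ := Real.sqrt r + t with hεdef
      have hε0 : 0 < ε := by
        have := Real.sqrt_nonneg r
        rw [hεdef]; linarith
      refine ⟨hε0, fun B hB => ?_⟩
      have hμB : μ B = J (Prod.fst ⁻¹' B) := by rw [← hJf, Measure.fst_apply hB]
      set G : Set (Ω × Ω) := {p : Ω × Ω | dist p.1 p.2 ≤ ε} with hG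
      have hsplit : J (Prod.fst ⁻¹' B) ≤ J (Prod.fst ⁻¹' B ∩ G) + J Gᶜ := by
        calc J (Prod.fst ⁻¹' B) ≤ J ((Prod.fst ⁻¹' B ∩ G) ∪ Gᶜ) := by
              apply measure_mono
              intro p hp
              by_cases h : p ∈ G
              · exact Or.inl ⟨hp, h⟩
              · exact Or.inr h
          _ ≤ J (Prod.fst ⁻¹' B ∩ G) + J Gᶜ := measure_union_le _ _
      have h2 : J (Prod.fst ⁻¹' B ∩ G) ≤ ν (cthickening ε B) := by
        rw [← hJs, Measure.snd_apply isClosed_cthickening.measurableSet]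
        apply measure_mono
        rintro p ⟨hp1, hp2⟩
        exact mem_cthickening_of_dist_le p.2 p.1 ε B hp1 (by rw [dist_comm]; exact hp2)
      have hMar : J Gᶜ ≤ ENNReal.ofReal ε := by
        have h3 : Gᶜ ⊆ {p : Ω × Ω | ENNReal.ofReal ε ≤ ENNReal.ofReal (dist p.1 p.2)} := by
          intro p hp
          simp only [hG, Set.mem_compl_iff, Set.mem_setOf_eq, not_le] at hp
          exact Set.mem_setOf_eq ▸ ENNReal.ofReal_le_ofReal hp.le
        have hmeas : AEMeasurable (fun p : Ω × Ω => ENNReal.ofReal (dist p.1 p.2)) J :=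
          ((continuous_fst.dist continuous_snd).measurable.ennreal_ofReal).aemeasurable
        have h4 := mul_meas_ge_le_lintegral₀ hmeas (ENNReal.ofReal ε)
        have h5 : ∫⁻ p, ENNReal.ofReal (dist p.1 p.2) ∂J = ENNReal.ofReal r := by
          rw [hre]
          exact (ofReal_integral_eq_lintegral_ofReal hint
            (Filter.Eventually.of_forall fun p => dist_nonneg)).symm
        have h6 : ENNReal.ofReal ε * J Gᶜ ≤ ENNReal.ofReal ε * ENNReal.ofReal ε := by
          have hrle : r ≤ ε * ε := by
            nlinarith [Real.sq_sqrt hr0, Real.sqrt_nonneg r]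
          calc ENNReal.ofReal ε * J Gᶜ
              ≤ ENNReal.ofReal ε * J {p : Ω × Ω |
                  ENNReal.ofReal ε ≤ ENNReal.ofReal (dist p.1 p.2)} :=
                mul_le_mul_right (measure_mono h3) _
            _ ≤ ∫⁻ p, ENNReal.ofReal (dist p.1 p.2) ∂J := h4
            _ = ENNReal.ofReal r := h5
            _ ≤ ENNReal.ofReal (ε * ε) := ENNReal.ofReal_le_ofReal hrle
            _ = ENNReal.ofReal ε * ENNReal.ofReal ε := ENNReal.ofReal_mul hε0.le
        have hεne : ENNReal.ofReal ε ≠ 0 := by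
          simp only [ne_eq, ENNReal.ofReal_eq_zero, not_le]
          exact hε0
        exact (ENNReal.mul_le_mul_iff_right hεne ENNReal.ofReal_ne_top).mp h6
      have hfin : μ B ≤ ν (cthickening ε B) + ENNReal.ofReal ε := by
        rw [hμB]
        exact hsplit.trans (add_le_add h2 hMar)
      have htR := ENNReal.toReal_mono
        (ENNReal.add_ne_top.mpr ⟨measure_ne_top ν _, ENNReal.ofReal_ne_top⟩) hfin
      rwa [ENNReal.toReal_add (measure_ne_top ν _) ENNReal.ofReal_ne_top,
        ENNReal.toReal_ofReal hε0.le] at htR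
    have hle : sInf Pset ≤ Real.sqrt r :=
      le_of_forall_pos_le_add (fun t ht => csInf_le hPbdd (key t ht))
    calc (sInf Pset) ^ 2 ≤ (Real.sqrt r) ^ 2 := pow_le_pow_left₀ hPnn hle 2
      _ = r := Real.sq_sqrt hr0
  · -- d_W ≤ (D+1) d_P
    have key : ∀ ε ∈ Pset, sInf Wset ≤ (D + 1) * ε := by
      rintro ε ⟨hε0, hεP⟩
      apply le_of_forall_pos_le_add
      intro δ hδ
      obtain ⟨J, hJf, hJs, hJi⟩ := wasserstein_le_of_prokhorov hbdd μ ν ε hε0 hεP δ hδ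
      exact (csInf_le hWbdd ⟨J, hJf, hJs, rfl⟩).trans hJi
    have hD1 : 0 < D + 1 := by linarith
    have hlb : ∀ ε ∈ Pset, sInf Wset / (D + 1) ≤ ε := by
      intro ε hε
      rw [div_le_iff₀ hD1]
      rw [mul_comm]
      exact key ε hε
    have hfin := le_csInf ⟨1, hPne⟩ hlb
    rwa [div_le_iff₀ hD1, mul_comm] at hfin
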